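/- Let k be a positive integer, c > 0 a constant, and define a: [0, π/2] → [0, π] by a(s) = 2·arctan(c·tanᵏ(s)) (with a(π/2) = π by continuity). Then a satisfies the ordinary differential equation a'(s) = sin(a(s))·√(k²/sin²s + k²/cos²s) for all s ∈ (0, π/2), together with the boundary conditions a(0) = 0 and a(π/2) = π. -/

import Mathlib

open Real

/-- For a positive integer k and c > 0, the function
a(s) = 2·arctan(c·tanᵏ s) on [0, π/2] (extended by continuity at π/2)
satisfies a'(s) = sin(a(s))·√(k²/sin²s + k²/cos²s) on (0, π/2), with
a(0) = 0 and a(π/2) = π. -/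
theorem stmt_2 (k : ℕ) (hk : 0 < k) (c : ℝ) (hc : 0 < c) (a : ℝ → ℝ)
    (hcont : ContinuousOn a (Set.Icc 0 (π / 2)))
    (hmaps : Set.MapsTo a (Set.Icc 0 (π / 2)) (Set.Icc 0 π))
    (hform : ∀ s ∈ Set.Ico 0 (π / 2), a s = 2 * arctan (c * tan s ^ k)) :
    (∀ s ∈ Set.Ioo 0 (π / 2),
        HasDerivAt a
          (sin (a s) * Real.sqrt ((k : ℝ) ^ 2 / sin s ^ 2 + (k : ℝ) ^ 2 / cos s ^ 2)) s) ∧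
      a 0 = 0 ∧ a (π / 2) = π := by
  have hπ : (0:ℝ) < π / 2 := by positivity
  refine ⟨?_, ?_, ?_⟩
  · intro s hs
    obtain ⟨hs0, hs1⟩ := hs
    have hsin : 0 < sin s := Real.sin_pos_of_pos_of_lt_pi hs0 (by linarith [Real.pi_pos])
    have hcos : 0 < cos s := Real.cos_pos_of_mem_Ioo ⟨by linarith, hs1⟩
    set u := c * tan s ^ k with hu
    have h1u : (0:ℝ) < 1 + u ^ 2 := by positivity
    have htan : HasDerivAt tan (1 / cos s ^ 2) s := Real.hasDerivAt_tan hcos.ne'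
    obtain ⟨m, rfl⟩ : ∃ m, k = m + 1 := ⟨k - 1, (Nat.succ_pred_eq_of_pos hk).symm⟩
    have hpow : HasDerivAt (fun x => c * tan x ^ (m + 1))
        (c * (((m : ℝ) + 1) * tan s ^ m * (1 / cos s ^ 2))) s := by
      have := (htan.pow (m + 1)).const_mul c
      refine this.congr_deriv ?_
      push_cast
      ring
    have harc : HasDerivAt arctan (1 / (1 + u ^ 2)) u := Real.hasDerivAt_arctan u
    have hg : HasDerivAt (fun x => 2 * arctan (c * tan x ^ (m + 1)))
        (2 * (1 / (1 + u ^ 2) * (c * (((m : ℝ) + 1) * tan s ^ m * (1 / cos s ^ 2))))) s :=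
      by have := (harc.comp s hpow).const_mul 2; exact this
    have heq : a =ᶠ[nhds s] fun x => 2 * arctan (c * tan x ^ (m + 1)) := by
      filter_upwards [isOpen_Ioo.mem_nhds (⟨hs0, hs1⟩ : s ∈ Set.Ioo 0 (π / 2))] with x hx
      exact hform x ⟨hx.1.le, hx.2⟩
    have hDa := hg.congr_of_eventuallyEq heq
    refine hDa.congr_deriv ?_
    have has : a s = 2 * arctan u := hform s ⟨hs0.le, hs1⟩
    have hsin2 : sin (a s) = 2 * u / (1 + u ^ 2) := by
      have hr0 : Real.sqrt (1 + u ^ 2) ≠ 0 := by positivity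
      rw [has, sin_two_mul, Real.sin_arctan, Real.cos_arctan]
      field_simp
      rw [Real.sq_sqrt h1u.le]
    have hsq : Real.sqrt (((m + 1 : ℕ) : ℝ) ^ 2 / sin s ^ 2 + ((m + 1 : ℕ) : ℝ) ^ 2 / cos s ^ 2)
        = ((m : ℝ) + 1) / (sin s * cos s) := by
      have hid : ((m + 1 : ℕ) : ℝ) ^ 2 / sin s ^ 2 + ((m + 1 : ℕ) : ℝ) ^ 2 / cos s ^ 2
          = (((m : ℝ) + 1) / (sin s * cos s)) ^ 2 := by
        have hpyt := Real.sin_sq_add_cos_sq s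
        field_simp
        push_cast
        linear_combination ((m : ℝ) + 1) ^ 2 * hpyt
      rw [hid]
      exact Real.sqrt_sq (by positivity)
    rw [hsin2, hsq, hu]
    have htan_eq : tan s = sin s / cos s := Real.tan_eq_sin_div_cos s
    rw [htan_eq]
    field_simp
    ring
    rw [mul_inv_cancel_right₀ hcos.ne']
  · have h0 := hform 0 ⟨le_refl 0, hπ⟩
    simp [Real.tan_zero, zero_pow hk.ne'] at h0
    exact h0
  · have hmem : π / 2 ∈ closure (Set.Ico (0:ℝ) (π / 2)) := by
      rw [closure_Ico hπ.ne]
      exact ⟨hπ.le, le_refl _⟩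
    haveI hNB : (nhdsWithin (π / 2) (Set.Ico (0:ℝ) (π / 2))).NeBot :=
      mem_closure_iff_nhdsWithin_neBot.mp hmem
    have hlim1 : Filter.Tendsto (fun x => 2 * arctan (c * tan x ^ k))
        (nhdsWithin (π / 2) (Set.Ico (0:ℝ) (π / 2))) (nhds π) := by
      have htan : Filter.Tendsto tan (nhdsWithin (π / 2) (Set.Iio (π / 2))) Filter.atTop :=
        Real.tendsto_tan_pi_div_two
      have hpow : Filter.Tendsto (fun x => c * tan x ^ k)
          (nhdsWithin (π / 2) (Set.Iio (π / 2))) Filter.atTop :=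
        ((Filter.tendsto_pow_atTop hk.ne').comp htan).const_mul_atTop hc
      have harc : Filter.Tendsto (fun x => 2 * arctan (c * tan x ^ k))
          (nhdsWithin (π / 2) (Set.Iio (π / 2))) (nhds (2 * (π / 2))) :=
        ((Real.tendsto_arctan_atTop.mono_right nhdsWithin_le_nhds).comp hpow).const_mul 2
      have h2 : 2 * (π / 2) = π := by ring
      rw [h2] at harc
      exact harc.mono_left (nhdsWithin_mono _ Set.Ico_subset_Iio_self)
    have hlim : Filter.Tendsto a (nhdsWithin (π / 2) (Set.Ico (0:ℝ) (π / 2))) (nhds π) := by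
      refine hlim1.congr' ?_
      filter_upwards [self_mem_nhdsWithin] with x hx
      exact (hform x hx).symm
    have hcw : Filter.Tendsto a (nhdsWithin (π / 2) (Set.Ico (0:ℝ) (π / 2)))
        (nhds (a (π / 2))) := by
      have := (hcont (π / 2) ⟨hπ.le, le_refl _⟩)
      exact this.mono_left (nhdsWithin_mono _ Set.Ico_subset_Icc_self)
    exact tendsto_nhds_unique hcw hlim
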